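/- arXiv:1907.06579 — 6 statements merged into one kernel-verified Lean document; each statement's English description precedes it below -/
import Mathlib

section
/- There is a bijection between the set BRP^0_n and the set of pairs (κ, f), where κ ∈ RP^0_n is a 2-restricted partition of length exactly n and f : {1,…,n} → {+,−} satisfies f(i) = f(j) whenever κ_i = κ_j; the bijection sends (μ, ν) to (μ∗ν, f) with f(i) = + iff (μ∗ν)_i appears as a part of μ. -/
/-- The list of parts of a multiset of naturals, sorted in weakly decreasing order. -/
def descParts (m : Multiset ℕ) : List ℕ := (m.sort (· ≤ ·)).reverse

/-- The `i`-th part (0-indexed) of a multiset of naturals, read in decreasing order,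
with the convention that parts beyond the length are `0`. -/
def partAt (m : Multiset ℕ) (i : ℕ) : ℕ := (descParts m).getD i 0

/-- `m` is a 2-restricted partition of length exactly `n`: it has exactly `n` parts, all
positive, and consecutive parts (padded by zero) differ by at most `1`. -/
def IsRP0 (n : ℕ) (m : Multiset ℕ) : Prop :=
  Multiset.card m = n ∧ (∀ a ∈ m, 0 < a) ∧ ∀ i, partAt m i ≤ partAt m (i + 1) + 1

lemma descParts_length (m : Multiset ℕ) : (descParts m).length = Multiset.card m := by
  simp [descParts]

lemma mem_descParts {m : Multiset ℕ} {a : ℕ} : a ∈ descParts m ↔ a ∈ m := by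
  simp [descParts]

lemma partAt_mem {m : Multiset ℕ} {i : ℕ} (h : i < Multiset.card m) : partAt m i ∈ m := by
  rw [← mem_descParts]
  have hl : i < (descParts m).length := by rwa [descParts_length]
  rw [partAt, List.getD_eq_getElem _ _ hl]
  exact List.getElem_mem _

lemma exists_partAt {m : Multiset ℕ} {a : ℕ} (h : a ∈ m) :
    ∃ i, i < Multiset.card m ∧ partAt m i = a := by
  rw [← mem_descParts] at h
  obtain ⟨i, hi, he⟩ := List.mem_iff_getElem.mp h
  exact ⟨i, by rwa [descParts_length] at hi,
    by rw [partAt, List.getD_eq_getElem _ _ hi]; exact he⟩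

lemma filter_eq_left {μ ν : Multiset ℕ} (hd : ∀ a ∈ μ, a ∉ ν) :
    (μ + ν).filter (· ∈ μ) = μ := by
  ext a
  rw [Multiset.count_filter]
  by_cases h : a ∈ μ
  · simp [h, Multiset.count_add, Multiset.count_eq_zero_of_notMem (hd a h)]
  · simp [h, Multiset.count_eq_zero_of_notMem h]

/-- There is a bijection between `BRP⁰ₙ` — bipartitions `(μ, ν)` (multisets of positive
parts, sharing no common part) with `μ∗ν ∈ RP⁰ₙ` — and pairs `(κ, f)` with `κ ∈ RP⁰ₙ` and
`f : {1,…,n} → {+,-}` constant on equal parts of `κ`; it sends `(μ, ν)` to `(μ∗ν, f)`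
where `f i = +` iff the `i`-th part of `μ∗ν` is a part of `μ`. -/
theorem stmt2 (n : ℕ) :
    ∃ F : {p : Multiset ℕ × Multiset ℕ //
            IsRP0 n (p.1 + p.2) ∧ (∀ a ∈ p.1, 0 < a) ∧ (∀ a ∈ p.2, 0 < a) ∧
              ∀ a ∈ p.1, a ∉ p.2} →
          {q : Multiset ℕ × (Fin n → Bool) //
            IsRP0 n q.1 ∧ ∀ i j : Fin n, partAt q.1 i.1 = partAt q.1 j.1 → q.2 i = q.2 j},
      Function.Bijective F ∧
        ∀ p, (F p).1.1 = p.1.1 + p.1.2 ∧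
          ∀ i : Fin n, (F p).1.2 i = decide (partAt (p.1.1 + p.1.2) i.1 ∈ p.1.1) := by
  refine ⟨fun p => ⟨(p.1.1 + p.1.2, fun i => decide (partAt (p.1.1 + p.1.2) i.1 ∈ p.1.1)),
      p.2.1, fun i j h => by simp only [h]⟩, ⟨?_, ?_⟩, fun p => ⟨rfl, fun i => rfl⟩⟩
  · -- injectivity
    rintro ⟨⟨μ, ν⟩, hp, hpμ, hpν, hd⟩ ⟨⟨μ', ν'⟩, hq, hqμ, hqν, hd'⟩ h
    have h1 : μ + ν = μ' + ν' := congrArg (fun x => x.1.1) h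
    have h2 : ∀ i : Fin n, decide (partAt (μ + ν) i.1 ∈ μ)
        = decide (partAt (μ' + ν') i.1 ∈ μ') := fun i =>
      congrFun (congrArg (fun x => x.1.2) h) i
    have hcard : Multiset.card (μ + ν) = n := hp.1
    have hμeq : μ = μ' := by
      have e1 : Multiset.filter (· ∈ μ) (μ + ν) = μ := filter_eq_left hd
      have e2 : Multiset.filter (· ∈ μ') (μ' + ν') = μ' := filter_eq_left hd'
      rw [← e1, ← e2, ← h1]
      refine Multiset.filter_congr (fun a ha => ?_)
      obtain ⟨i, hi, hia⟩ := exists_partAt ha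
      rw [hcard] at hi
      have hia' : partAt (μ' + ν') i = a := h1 ▸ hia
      have := h2 ⟨i, hi⟩
      rw [hia, hia'] at this
      simpa [decide_eq_decide] using this
    apply Subtype.ext
    have : ν = ν' := by
      have := h1; rw [hμeq] at this
      exact (add_right_injective μ') this
    simp [hμeq, this]
  · -- surjectivity
    rintro ⟨⟨κ, f⟩, hκ, hf⟩
    classical
    set g : ℕ → Prop := fun a => ∃ i : Fin n, partAt κ i.1 = a ∧ f i = true with hg
    set μ : Multiset ℕ := κ.filter g with hμ
    set ν : Multiset ℕ := κ.filter (fun a => ¬ g a) with hν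
    have hadd : μ + ν = κ := Multiset.filter_add_not g κ
    have hdisj : ∀ a ∈ μ, a ∉ ν := by
      intro a ha hb
      exact (Multiset.mem_filter.mp hb).2 (Multiset.mem_filter.mp ha).2
    refine ⟨⟨(μ, ν), by rw [hadd]; exact hκ,
      fun a ha => hκ.2.1 a (Multiset.mem_filter.mp ha).1,
      fun a ha => hκ.2.1 a (Multiset.mem_filter.mp ha).1, hdisj⟩, ?_⟩
    apply Subtype.ext
    simp only
    refine Prod.ext (by simpa using hadd) ?_
    funext i
    simp only [hadd]
    have hin : partAt κ i.1 ∈ κ := partAt_mem (by rw [hκ.1]; exact i.2)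
    have : partAt κ i.1 ∈ μ ↔ f i = true := by
      rw [hμ, Multiset.mem_filter]
      constructor
      · rintro ⟨-, j, hj, hjt⟩
        have hji : f j = f i := hf j i hj
        exact hji.symm.trans hjt
      · intro ht
        exact ⟨hin, i, rfl, ht⟩
    simp only [this]
    cases hb : f i <;> simp [hb]
end

section
/- Let g be a finite-dimensional classical Lie superalgebra over ℂ. For every element H ∈ [g₁, g₁] ∩ z(g₀), the trace of ad_H acting on g₁ is zero. -/
/-- The odd data of a complex Lie superalgebra `g = g₀ ⊕ g₁`, where the even part `g₀` is a
complex Lie algebra: the brackets `b01 : g₀ × g₁ → g₁` and `b11 : g₁ × g₁ → g₀`, subject to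
the super-Jacobi identities. -/
structure SuperStructure (g0 g1 : Type*) [LieRing g0] [LieAlgebra ℂ g0]
    [AddCommGroup g1] [Module ℂ g1] where
  b01 : g0 →ₗ[ℂ] g1 →ₗ[ℂ] g1
  b11 : g1 →ₗ[ℂ] g1 →ₗ[ℂ] g0
  symm11 : ∀ u v, b11 u v = b11 v u
  jacobi001 : ∀ x y v, b01 ⁅x, y⁆ v = b01 x (b01 y v) - b01 y (b01 x v)
  jacobi011 : ∀ x u v, ⁅x, b11 u v⁆ = b11 (b01 x u) v + b11 u (b01 x v)
  jacobi111 : ∀ u v w, b01 (b11 u v) w + b01 (b11 v w) u + b01 (b11 w u) v = 0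

variable {g0 g1 : Type*} [LieRing g0] [LieAlgebra ℂ g0] [AddCommGroup g1] [Module ℂ g1]

/-- The subspace `[g₁, g₁] ⊆ g₀`. -/
def oddSquare (S : SuperStructure g0 g1) : Submodule ℂ g0 :=
  Submodule.span ℂ (Set.range fun uv : g1 × g1 => S.b11 uv.1 uv.2)

/-- On generators of `[g₁,g₁]`, the trace of `b01` on `g₁` equals the trace of `ad` on `g₀`. -/
theorem trace_b01_eq_trace_ad [FiniteDimensional ℂ g0] [FiniteDimensional ℂ g1]
    (S : SuperStructure g0 g1) (u v : g1) :
    LinearMap.trace ℂ g1 (S.b01 (S.b11 u v)) =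
      LinearMap.trace ℂ g0 ((LieAlgebra.ad ℂ g0) (S.b11 u v)) := by
  set P : g1 → (g0 →ₗ[ℂ] g1) := fun w => S.b01.flip w with hP
  set Q : g1 → (g1 →ₗ[ℂ] g0) := fun w => S.b11 w with hQ
  have h1 : S.b01 (S.b11 u v) = -(P u ∘ₗ Q v) - (P v ∘ₗ Q u) := by
    ext w
    have j := S.jacobi111 u v w
    have hs : S.b11 u w = S.b11 w u := S.symm11 u w
    simp only [LinearMap.sub_apply, LinearMap.neg_apply, LinearMap.comp_apply, hP, hQ,
      LinearMap.flip_apply, hs]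
    linear_combination (norm := abel) j
  have h2 : (LieAlgebra.ad ℂ g0) (S.b11 u v) = -(Q v ∘ₗ P u) - (Q u ∘ₗ P v) := by
    ext x
    have j := S.jacobi011 x u v
    have hs : S.b11 v (S.b01 x u) = S.b11 (S.b01 x u) v := S.symm11 _ _
    have hx : ⁅S.b11 u v, x⁆ = -⁅x, S.b11 u v⁆ := (lie_skew _ _).symm
    simp only [LieAlgebra.ad_apply, LinearMap.sub_apply, LinearMap.neg_apply,
      LinearMap.comp_apply, hP, hQ, LinearMap.flip_apply, hx, j, hs]
    abel
  rw [h1, h2]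
  simp only [map_sub, map_neg]
  rw [LinearMap.trace_comp_comm' (P u) (Q v), LinearMap.trace_comp_comm' (P v) (Q u)]

/-- Let `g = g₀ ⊕ g₁` be a finite-dimensional classical Lie superalgebra over `ℂ` (the
adjoint action of `g₀` on `g₀` and on `g₁` is completely reducible).  For every
`H ∈ [g₁, g₁] ∩ z(g₀)`, the trace of `ad_H` acting on `g₁` is zero. -/
theorem stmt6 [FiniteDimensional ℂ g0] [FiniteDimensional ℂ g1]
    (S : SuperStructure g0 g1)
    (hcr0 : ∀ W : LieSubmodule ℂ g0 g0, ∃ W', IsCompl W W')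
    (hcr1 : ∀ W : Submodule ℂ g1, (∀ (x : g0), ∀ v ∈ W, S.b01 x v ∈ W) →
      ∃ W' : Submodule ℂ g1, (∀ (x : g0), ∀ v ∈ W', S.b01 x v ∈ W') ∧ IsCompl W W')
    (H : g0) (hH1 : H ∈ oddSquare S) (hH2 : H ∈ LieAlgebra.center ℂ g0) :
    LinearMap.trace ℂ g1 (S.b01 H) = 0 := by
  have key : ∀ h ∈ oddSquare S,
      LinearMap.trace ℂ g1 (S.b01 h) = LinearMap.trace ℂ g0 ((LieAlgebra.ad ℂ g0) h) := by
    intro h hh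
    refine Submodule.span_induction ?_ ?_ ?_ ?_ hh
    · rintro _ ⟨⟨u, v⟩, rfl⟩
      exact trace_b01_eq_trace_ad S u v
    · simp
    · intro a b _ _ ha hb
      simp only [map_add, ha, hb]
    · intro c a _ ha
      simp only [map_smul, ha, smul_eq_mul]
  have hadH : (LieAlgebra.ad ℂ g0) H = 0 := by
    ext x
    have := hH2 x
    simp only [LieAlgebra.ad_apply, LinearMap.zero_apply]
    rw [← lie_skew, this, neg_zero]
  rw [key H hH1, hadH, map_zero]
end

section
/- Let k be a finite-dimensional Lie superalgebra over ℂ, X ∈ k₀ an even element, and L a simple k-module. Then either X acts freely on L (i.e., L is a torsion-free module over the polynomial algebra ℂ[X] ⊆ U(k)), or X acts locally finitely on L (every vector of L is contained in a finite-dimensional X-invariant subspace). -/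
open Polynomial

/-- Enlarge a finite-dimensional `A`-invariant subspace to one also containing the image
under a (linear family of) operators `ρ z` whose commutator with `A` is again of that form. -/
lemma aux_enlarge {L M : Type*} [AddCommGroup L] [Module ℂ L]
    [AddCommGroup M] [Module ℂ M] [FiniteDimensional ℂ M]
    (A : Module.End ℂ L) (ρ : M →ₗ[ℂ] Module.End ℂ L) (D : M →ₗ[ℂ] M)
    (hcomm : ∀ z : M, A * ρ z = ρ z * A + ρ (D z))
    (W : Submodule ℂ L) (hfd : FiniteDimensional ℂ W) (hW : ∀ u ∈ W, A u ∈ W) :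
    ∃ W' : Submodule ℂ L, FiniteDimensional ℂ W' ∧ W ≤ W' ∧
      (∀ u ∈ W', A u ∈ W') ∧ ∀ z : M, ∀ x ∈ W, ρ z x ∈ W' := by
  classical
  have := hfd
  let b := Module.finBasis ℂ M
  let T : Submodule ℂ L := ⨆ i, W.map (ρ (b i))
  have hT : ∀ z : M, ∀ x ∈ W, ρ z x ∈ T := by
    intro z x hx
    have hz : (∑ i, b.repr z i • b i) = z := b.sum_repr z
    rw [← hz]
    simp only [map_sum, LinearMap.coe_sum, Finset.sum_apply, map_smul, LinearMap.smul_apply]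
    refine Submodule.sum_mem _ fun i _ => Submodule.smul_mem _ _ ?_
    exact le_iSup (fun i => W.map (ρ (b i))) i ⟨x, hx, rfl⟩
  have hTfd : FiniteDimensional ℂ T := inferInstance
  refine ⟨W ⊔ T, inferInstance, le_sup_left, ?_, fun z x hx => Submodule.mem_sup_right (hT z x hx)⟩
  intro u hu
  rw [Submodule.mem_sup] at hu
  obtain ⟨a, ha, t, ht, rfl⟩ := hu
  rw [map_add]
  refine Submodule.add_mem _ (Submodule.mem_sup_left (hW a ha)) ?_
  refine Submodule.iSup_induction (motive := fun t => A t ∈ W ⊔ T) _ ht ?_ (by simp) ?_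
  · rintro i x ⟨y, hy, rfl⟩
    have : A (ρ (b i) y) = ρ (b i) (A y) + ρ (D (b i)) y := by
      have := congrFun (congrArg DFunLike.coe (hcomm (b i))) y
      simpa using this
    rw [this]
    refine Submodule.add_mem _ ?_ (Submodule.mem_sup_right (hT _ _ hy))
    exact Submodule.mem_sup_right (le_iSup (fun i => W.map (ρ (b i))) i ⟨A y, hW y hy, rfl⟩)
  · intro x y hx hy
    rw [map_add]; exact Submodule.add_mem _ hx hy

lemma aux_cyclic {L : Type*} [AddCommGroup L] [Module ℂ L]
    (A : Module.End ℂ L) (p : ℂ[X]) (hp : p ≠ 0) (w : L) (hw : w ≠ 0)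
    (hpw : Polynomial.aeval A p w = 0) :
    ∃ W : Submodule ℂ L, FiniteDimensional ℂ W ∧ w ∈ W ∧ ∀ u ∈ W, A u ∈ W := by
  classical
  set p' : ℂ[X] := p * C p.leadingCoeff⁻¹ with hp'def
  have hmonic : p'.Monic := monic_mul_leadingCoeff_inv hp
  have h'w : Polynomial.aeval A p' w = 0 := by
    rw [hp'def, mul_comm, map_mul]
    simp [Module.End.mul_apply, hpw]
  set d := p'.natDegree with hddef
  have hd : d ≠ 0 := by
    intro h0
    have : p' = 1 := hmonic.natDegree_eq_zero.mp h0
    rw [this] at h'w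
    simp at h'w
    exact hw h'w
  let φ : ℂ[X] →ₗ[ℂ] L :=
    { toFun := fun q => Polynomial.aeval A q w
      map_add' := fun a b => by simp [map_add, LinearMap.add_apply]
      map_smul' := fun c a => by simp [map_smul] }
  have hφ : ∀ q : ℂ[X], φ q = Polynomial.aeval A q w := fun _ => rfl
  let W₀ : Submodule ℂ L := Submodule.span ℂ (Set.range fun i : Fin d => (A ^ (i : ℕ)) w)
  have hW₀fd : FiniteDimensional ℂ W₀ :=
    FiniteDimensional.span_of_finite ℂ (Set.finite_range _)
  have hle : LinearMap.range φ ≤ W₀ := by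
    rintro _ ⟨q, rfl⟩
    have hdq : q = q %ₘ p' + p' * (q /ₘ p') := (modByMonic_add_div q p').symm
    rw [hφ, hdq, map_add, LinearMap.add_apply]
    have h2 : Polynomial.aeval A (p' * (q /ₘ p')) w = 0 := by
      rw [mul_comm, map_mul]
      simp [Module.End.mul_apply, h'w]
    rw [h2, add_zero]
    have hr : (q %ₘ p').natDegree < d := by
      by_cases h0 : q %ₘ p' = 0
      · rw [h0]; simpa using Nat.pos_of_ne_zero hd
      · exact natDegree_lt_natDegree h0 (degree_modByMonic_lt q hmonic)
    rw [Polynomial.aeval_eq_sum_range' hr]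
    simp only [LinearMap.coe_sum, Finset.sum_apply, LinearMap.smul_apply]
    refine Submodule.sum_mem _ fun i hi => Submodule.smul_mem _ _ ?_
    exact Submodule.subset_span ⟨⟨i, Finset.mem_range.mp hi⟩, rfl⟩
  refine ⟨LinearMap.range φ, Submodule.finiteDimensional_of_le hle, ⟨1, by simp [hφ]⟩, ?_⟩
  rintro _ ⟨q, rfl⟩
  refine ⟨Polynomial.X * q, ?_⟩
  rw [hφ, hφ, map_mul]
  simp [Module.End.mul_apply]


/-- Let `k` be a finite-dimensional Lie superalgebra over `ℂ`, `X ∈ k₀`, and `L` a simple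
`k`-module.  Then either `X` acts freely on `L` (i.e. `L` is torsion-free over `ℂ[X]`), or
`X` acts locally finitely on `L`. -/
theorem stmt8 {g0 g1 L : Type*} [LieRing g0] [LieAlgebra ℂ g0]
    [AddCommGroup g1] [Module ℂ g1] [AddCommGroup L] [Module ℂ L]
    [FiniteDimensional ℂ g0] [FiniteDimensional ℂ g1] [Nontrivial L]
    (S : SuperStructure g0 g1)
    (ρ0 : g0 →ₗ[ℂ] Module.End ℂ L) (ρ1 : g1 →ₗ[ℂ] Module.End ℂ L)
    (hrep0 : ∀ x y, ρ0 ⁅x, y⁆ = ρ0 x * ρ0 y - ρ0 y * ρ0 x)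
    (hrep01 : ∀ x u, ρ1 (S.b01 x u) = ρ0 x * ρ1 u - ρ1 u * ρ0 x)
    (hrep11 : ∀ u v, ρ0 (S.b11 u v) = ρ1 u * ρ1 v + ρ1 v * ρ1 u)
    (hsimple : ∀ W : Submodule ℂ L,
      (∀ (x : g0), ∀ w ∈ W, ρ0 x w ∈ W) → (∀ (u : g1), ∀ w ∈ W, ρ1 u w ∈ W) →
        W = ⊥ ∨ W = ⊤)
    (X : g0) :
    (∀ p : Polynomial ℂ, p ≠ 0 → ∀ w : L, w ≠ 0 → Polynomial.aeval (ρ0 X) p w ≠ 0) ∨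
    (∀ v : L, ∃ W : Submodule ℂ L, FiniteDimensional ℂ W ∧ v ∈ W ∧
      ∀ w ∈ W, ρ0 X w ∈ W) := by
  classical
  by_cases hfree : (∀ p : Polynomial ℂ, p ≠ 0 → ∀ w : L, w ≠ 0 →
      Polynomial.aeval (ρ0 X) p w ≠ 0)
  · exact Or.inl hfree
  right
  push_neg at hfree
  obtain ⟨p, hp, w, hw, hpw⟩ := hfree
  obtain ⟨W, Wfd, hwW, hWinv⟩ := aux_cyclic (ρ0 X) p hp w hw hpw
  -- the submodule of locally finite vectors
  let P : L → Prop := fun v => ∃ W : Submodule ℂ L, FiniteDimensional ℂ W ∧ v ∈ W ∧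
    ∀ u ∈ W, ρ0 X u ∈ W
  let L' : Submodule ℂ L :=
    { carrier := {v | P v}
      add_mem' := by
        rintro a b ⟨W1, fd1, ha, h1⟩ ⟨W2, fd2, hb, h2⟩
        haveI := fd1; haveI := fd2
        refine ⟨W1 ⊔ W2, inferInstance,
          Submodule.add_mem _ (Submodule.mem_sup_left ha) (Submodule.mem_sup_right hb), ?_⟩
        intro u hu
        rw [Submodule.mem_sup] at hu
        obtain ⟨y, hy, z, hz, rfl⟩ := hu
        rw [map_add]
        exact Submodule.add_mem _ (Submodule.mem_sup_left (h1 y hy))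
          (Submodule.mem_sup_right (h2 z hz))
      zero_mem' := ⟨⊥, inferInstance, Submodule.zero_mem _, by
        intro u hu
        rw [Submodule.mem_bot] at hu
        simp [hu]⟩
      smul_mem' := by
        rintro c a ⟨W1, fd1, ha, h1⟩
        exact ⟨W1, fd1, Submodule.smul_mem _ _ ha, h1⟩ }
  have hmem : ∀ v : L, v ∈ L' ↔ P v := fun v => Iff.rfl
  -- invariance under ρ0
  have hinv0 : ∀ (x : g0), ∀ v ∈ L', ρ0 x v ∈ L' := by
    rintro x v ⟨W1, fd1, hv, h1⟩
    have hcomm : ∀ z : g0, ρ0 X * ρ0 z = ρ0 z * ρ0 X + ρ0 ((LieAlgebra.ad ℂ g0 X) z) := by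
      intro z
      simp only [LieAlgebra.ad_apply]
      rw [hrep0 X z]
      abel
    obtain ⟨W', fd', hle, hinv', hρ⟩ :=
      aux_enlarge (ρ0 X) ρ0 (LieAlgebra.ad ℂ g0 X) hcomm W1 fd1 h1
    exact ⟨W', fd', hρ x v hv, hinv'⟩
  -- invariance under ρ1
  have hinv1 : ∀ (u : g1), ∀ v ∈ L', ρ1 u v ∈ L' := by
    rintro u v ⟨W1, fd1, hv, h1⟩
    have hcomm : ∀ z : g1, ρ0 X * ρ1 z = ρ1 z * ρ0 X + ρ1 (S.b01 X z) := by
      intro z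
      rw [hrep01 X z]
      abel
    obtain ⟨W', fd', hle, hinv', hρ⟩ := aux_enlarge (ρ0 X) ρ1 (S.b01 X) hcomm W1 fd1 h1
    exact ⟨W', fd', hρ u v hv, hinv'⟩
  rcases hsimple L' hinv0 hinv1 with hbot | htop
  · exfalso
    have : w ∈ L' := ⟨W, Wfd, hwW, hWinv⟩
    rw [hbot, Submodule.mem_bot] at this
    exact hw this
  · intro v
    have : v ∈ L' := htop ▸ Submodule.mem_top
    exact this
end

section
/- For a bipartition x = (μ, ν) in BRP^{00}_n with p = ℓ(μ), the Borel subalgebra b(ζ_x) of the periplectic Lie superalgebra pe(n) has odd part of dimension n(n−1)/2 + p. -/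
/-- The basis vector `ε_i` (1-indexed) of the weight lattice, as a function `ℕ → ℤ`. -/
def eps (i : ℕ) : ℕ → ℤ := fun k => if k = i then 1 else 0

/-- The odd roots of `pe(n)`:
`{ε_i + ε_j : 1 ≤ i ≤ j ≤ n} ∪ {-ε_i - ε_j : 1 ≤ i < j ≤ n}`. -/
def OddRoots (n : ℕ) : Set (ℕ → ℤ) :=
  {α | ∃ i j, 1 ≤ i ∧ i ≤ j ∧ j ≤ n ∧ α = eps i + eps j} ∪
  {α | ∃ i j, 1 ≤ i ∧ i < j ∧ j ≤ n ∧ α = -eps i - eps j}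

/-- The standard bilinear form `(ζ, α) = Σ_{k=1}^n ζ_k α_k`. -/
def pairing (n : ℕ) (ζ α : ℕ → ℤ) : ℤ := ∑ k ∈ Finset.Icc 1 n, ζ k * α k

/-- The weight `ζ_x = Σ_i μ_i ε_i − Σ_j ν_j ε_{n+1−j}` attached to a bipartition
`x = (μ, ν)` with `ℓ(μ) = p` (partitions given as 1-indexed sequences of parts). -/
def zetaWt (n p : ℕ) (μ ν : ℕ → ℕ) : ℕ → ℤ :=
  fun k => if k ≤ p then (μ k : ℤ) else -(ν (n + 1 - k) : ℤ)

lemma eps_mem_key (x y u v : ℕ) (h : eps x + eps y = eps u + eps v) :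
    x = u ∨ x = v := by
  by_cases h1 : x = u
  · exact Or.inl h1
  by_cases h2 : x = v
  · exact Or.inr h2
  exfalso
  have hx := congrFun h x
  simp only [Pi.add_apply, eps] at hx
  split_ifs at hx <;> omega

lemma eps_inj {i j a b : ℕ} (hij : i ≤ j) (hab : a ≤ b)
    (h : eps i + eps j = eps a + eps b) : i = a ∧ j = b := by
  have h1 := eps_mem_key i j a b h
  have h2 := eps_mem_key j i a b (by rwa [add_comm (eps j)])
  have h3 := eps_mem_key a b i j h.symm
  have h4 := eps_mem_key b a i j (by rw [add_comm (eps b)]; exact h.symm)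
  omega

lemma neg_eps_eq {i j a b : ℕ} (h : -eps i - eps j = -eps a - eps b) :
    eps i + eps j = eps a + eps b := by
  have e : ∀ x y : ℕ → ℤ, -x - y = -(x + y) := fun x y => by abel
  rw [e, e] at h
  exact neg_injective h

lemma pairing_eps (n : ℕ) (ζ : ℕ → ℤ) {i j : ℕ} (hi1 : 1 ≤ i) (hi2 : i ≤ n)
    (hj1 : 1 ≤ j) (hj2 : j ≤ n) :
    pairing n ζ (eps i + eps j) = ζ i + ζ j := by
  unfold pairing
  simp only [Pi.add_apply, eps, mul_add, mul_ite, mul_one, mul_zero]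
  rw [Finset.sum_add_distrib, Finset.sum_ite_eq', Finset.sum_ite_eq']
  simp [Finset.mem_Icc, hi1, hi2, hj1, hj2]

lemma pairing_neg_eps (n : ℕ) (ζ : ℕ → ℤ) {i j : ℕ} (hi1 : 1 ≤ i) (hi2 : i ≤ n)
    (hj1 : 1 ≤ j) (hj2 : j ≤ n) :
    pairing n ζ (-eps i - eps j) = -(ζ i + ζ j) := by
  have e : (-eps i - eps j : ℕ → ℤ) = -(eps i + eps j) := by abel
  rw [e, ← pairing_eps n ζ hi1 hi2 hj1 hj2]
  unfold pairing
  rw [← Finset.sum_neg_distrib]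
  exact Finset.sum_congr rfl fun k _ => by simp [Pi.neg_apply, Pi.add_apply]; ring

lemma sum_count (n : ℕ) : ∑ i ∈ Finset.Icc 1 n, (n - i) = n * (n - 1) / 2 := by
  rw [show Finset.Icc 1 n = Finset.Ico 1 (n + 1) by rw [Finset.Ico_add_one_right_eq_Icc]]
  rw [Finset.sum_Ico_eq_sum_range]
  rw [show n + 1 - 1 = n by omega]
  have h1 : ∀ i ∈ Finset.range n, n - (1 + i) = n - 1 - i := by
    intro i _; omega
  rw [Finset.sum_congr rfl h1, Finset.sum_range_reflect (fun j => j) n]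
  exact Finset.sum_range_id n


/-- For a bipartition `x = (μ, ν) ∈ BRP⁰⁰ₙ` (i.e. the parts of `μ` and `ν` together are
exactly `n, n-1, …, 1`) with `p = ℓ(μ)`, the Borel subalgebra `b(ζ_x)` of `pe(n)` has odd
part of dimension `n(n−1)/2 + p`, i.e. the number of odd roots `α` with `(ζ_x, α) > 0` is
`n(n−1)/2 + p`. -/
theorem stmt9 (n p q : ℕ) (hpq : p + q = n) (μ ν : ℕ → ℕ)
    (hμpos : ∀ i, 1 ≤ i → i ≤ p → 0 < μ i) (hμ0 : ∀ i, p < i → μ i = 0)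
    (hμdec : ∀ i, 1 ≤ i → μ (i + 1) ≤ μ i)
    (hνpos : ∀ j, 1 ≤ j → j ≤ q → 0 < ν j) (hν0 : ∀ j, q < j → ν j = 0)
    (hνdec : ∀ j, 1 ≤ j → ν (j + 1) ≤ ν j)
    (hstair : ((Finset.Icc 1 p).val.map μ) + ((Finset.Icc 1 q).val.map ν)
      = (Finset.Icc 1 n).val) :
    Set.ncard {α | α ∈ OddRoots n ∧ 0 < pairing n (zetaWt n p μ ν) α}
      = n * (n - 1) / 2 + p := by
  classical
  set ζ : ℕ → ℤ := zetaWt n p μ ν with hzdef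
  have hz : ∀ k, ζ k = if k ≤ p then (μ k : ℤ) else -(ν (n + 1 - k) : ℤ) :=
    fun k => rfl
  have hζpos : ∀ i, 1 ≤ i → i ≤ p → 0 < ζ i := by
    intro i h1 h2
    rw [hz i, if_pos h2]
    exact_mod_cast hμpos i h1 h2
  have hζneg : ∀ j, p < j → j ≤ n → ζ j < 0 := by
    intro j h1 h2
    rw [hz j, if_neg (by omega)]
    have h0 : 0 < ν (n + 1 - j) := hνpos _ (by omega) (by omega)
    omega
  have hdisj : ∀ i j, 1 ≤ i → i ≤ p → 1 ≤ j → j ≤ q → μ i ≠ ν j := by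
    intro i j hi1 hi2 hj1 hj2 heq
    have hnd : (Finset.Icc 1 n).val.Nodup := (Finset.Icc 1 n).nodup
    have hle1 : Multiset.count (μ i) (Finset.Icc 1 n).val ≤ 1 :=
      Multiset.nodup_iff_count_le_one.mp hnd _
    rw [← hstair, Multiset.count_add] at hle1
    have hm1 : μ i ∈ (Finset.Icc 1 p).val.map μ :=
      Multiset.mem_map.mpr ⟨i, Finset.mem_val.mpr (Finset.mem_Icc.mpr ⟨hi1, hi2⟩), rfl⟩
    have hm2 : ν j ∈ (Finset.Icc 1 q).val.map ν :=
      Multiset.mem_map.mpr ⟨j, Finset.mem_val.mpr (Finset.mem_Icc.mpr ⟨hj1, hj2⟩), rfl⟩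
    have c1 : 0 < Multiset.count (μ i) ((Finset.Icc 1 p).val.map μ) :=
      Multiset.count_pos.mpr hm1
    have c2 : 0 < Multiset.count (μ i) ((Finset.Icc 1 q).val.map ν) := by
      rw [heq]; exact Multiset.count_pos.mpr hm2
    omega
  have hsumne : ∀ i j, 1 ≤ i → i < j → j ≤ n → ζ i + ζ j ≠ 0 := by
    intro i j h1 h2 h3
    by_cases hip : i ≤ p
    · by_cases hjp : j ≤ p
      · have a1 := hζpos i h1 hip
        have a2 := hζpos j (by omega) hjp
        omega
      · have hj1 : 1 ≤ n + 1 - j := by omega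
        have hj2 : n + 1 - j ≤ q := by omega
        have hne := hdisj i (n + 1 - j) h1 hip hj1 hj2
        rw [hz i, hz j, if_pos hip, if_neg hjp]
        omega
    · have a1 := hζneg i (by omega) (by omega)
      have a2 := hζneg j (by omega) h3
      omega
  have hζnz : ∀ i, 1 ≤ i → i ≤ n → ζ i ≠ 0 := by
    intro i h1 h2
    by_cases hip : i ≤ p
    · have := hζpos i h1 hip; omega
    · have := hζneg i (by omega) h2; omega
  -- Finsets
  set P : Finset (ℕ × ℕ) := Finset.Icc 1 n ×ˢ Finset.Icc 1 n with hP
  set A : Finset (ℕ × ℕ) :=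
    P.filter (fun ij => ij.1 ≤ ij.2 ∧ 0 < ζ ij.1 + ζ ij.2) with hA
  set B : Finset (ℕ × ℕ) :=
    P.filter (fun ij => ij.1 < ij.2 ∧ ζ ij.1 + ζ ij.2 < 0) with hB
  set F1 : Finset (ℕ → ℤ) := A.image (fun ij => eps ij.1 + eps ij.2) with hF1
  set F2 : Finset (ℕ → ℤ) := B.image (fun ij => -eps ij.1 - eps ij.2) with hF2
  have hset : {α | α ∈ OddRoots n ∧ 0 < pairing n ζ α} = ↑(F1 ∪ F2) := by
    ext α
    simp only [Set.mem_setOf_eq, Finset.coe_union, Set.mem_union, Finset.mem_coe,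
      hF1, hF2, hA, hB, hP, Finset.mem_image, Finset.mem_filter, Finset.mem_product,
      Finset.mem_Icc, OddRoots, Set.mem_setOf_eq]
    constructor
    · rintro ⟨hroot, hpos⟩
      rcases hroot with ⟨i, j, h1, h2, h3, rfl⟩ | ⟨i, j, h1, h2, h3, rfl⟩
      · left
        refine ⟨(i, j), ⟨⟨⟨h1, h2.trans h3⟩, ⟨h1.trans h2, h3⟩⟩, h2, ?_⟩, rfl⟩
        rwa [pairing_eps n ζ h1 (h2.trans h3) (h1.trans h2) h3] at hpos
      · right
        refine ⟨(i, j), ⟨⟨⟨h1, h2.le.trans h3⟩, ⟨by omega, h3⟩⟩, h2, ?_⟩, rfl⟩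
        rw [pairing_neg_eps n ζ h1 (h2.le.trans h3) (by omega) h3] at hpos
        exact neg_pos.mp hpos
    · rintro (⟨⟨i, j⟩, ⟨⟨⟨hi1, hi2⟩, hj1, hj2⟩, hle, hs⟩, rfl⟩ |
              ⟨⟨i, j⟩, ⟨⟨⟨hi1, hi2⟩, hj1, hj2⟩, hlt, hs⟩, rfl⟩)
      · exact ⟨Or.inl ⟨i, j, hi1, hle, hj2, rfl⟩,
          by rw [pairing_eps n ζ hi1 hi2 hj1 hj2]; exact hs⟩
      · exact ⟨Or.inr ⟨i, j, hi1, hlt, hj2, rfl⟩,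
          by rw [pairing_neg_eps n ζ hi1 hi2 hj1 hj2]; exact neg_pos.mpr hs⟩
  rw [hset, Set.ncard_coe_finset]
  have hdisjF : Disjoint F1 F2 := by
    rw [Finset.disjoint_left]
    rintro α h1 h2
    rw [hF1, Finset.mem_image] at h1
    rw [hF2, Finset.mem_image] at h2
    obtain ⟨⟨i, j⟩, _, rfl⟩ := h1
    obtain ⟨⟨a, b⟩, _, hab⟩ := h2
    have := congrFun hab i
    simp only [Pi.add_apply, Pi.sub_apply, Pi.neg_apply, eps] at this
    split_ifs at this <;> omega
  rw [Finset.card_union_of_disjoint hdisjF]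
  have hcard1 : F1.card = A.card := by
    apply Finset.card_image_of_injOn
    intro x hx y hy hxy
    simp only [hA, Finset.mem_coe, Finset.mem_filter] at hx hy
    have := eps_inj hx.2.1 hy.2.1 hxy
    exact Prod.ext this.1 this.2
  have hcard2 : F2.card = B.card := by
    apply Finset.card_image_of_injOn
    intro x hx y hy hxy
    simp only [hB, Finset.mem_coe, Finset.mem_filter] at hx hy
    have := eps_inj hx.2.1.le hy.2.1.le (neg_eps_eq hxy)
    exact Prod.ext this.1 this.2
  rw [hcard1, hcard2]
  -- counting
  rw [hA, hB, Finset.card_filter, Finset.card_filter, ← Finset.sum_add_distrib]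
  have key : ∀ ij ∈ P,
      ((if ij.1 ≤ ij.2 ∧ 0 < ζ ij.1 + ζ ij.2 then 1 else 0) +
        if ij.1 < ij.2 ∧ ζ ij.1 + ζ ij.2 < 0 then 1 else 0)
      = ((if ij.1 < ij.2 then 1 else 0) +
        if ij.1 = ij.2 ∧ 0 < ζ ij.1 then 1 else 0) := by
    rintro ⟨i, j⟩ hmem
    rw [hP, Finset.mem_product, Finset.mem_Icc, Finset.mem_Icc] at hmem
    obtain ⟨⟨hi1, hi2⟩, hj1, hj2⟩ := hmem
    rcases lt_trichotomy i j with h | h | h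
    · have hne := hsumne i j hi1 h hj2
      simp only [h, h.le, h.ne, true_and, if_true, false_and, if_false]
      split_ifs <;> omega
    · subst h
      have hnz := hζnz i hi1 hi2
      simp only [le_refl, lt_irrefl, true_and, false_and, if_false, if_true]
      split_ifs <;> omega
    · simp only [show ¬ i ≤ j by omega, show ¬ i < j by omega,
        show ¬ i = j by omega, false_and, if_false]
  rw [Finset.sum_congr rfl key, Finset.sum_add_distrib]
  congr 1
  · -- strictly upper triangular count
    rw [hP, Finset.sum_product]
    have inner : ∀ i ∈ Finset.Icc 1 n,
        (∑ j ∈ Finset.Icc 1 n, if i < j then 1 else 0) = n - i := by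
      intro i hi
      rw [Finset.mem_Icc] at hi
      rw [← Finset.card_filter]
      have : (Finset.Icc 1 n).filter (fun j => i < j) = Finset.Icc (i + 1) n := by
        ext j; simp only [Finset.mem_filter, Finset.mem_Icc]; omega
      rw [this, Nat.card_Icc]
      omega
    rw [Finset.sum_congr rfl inner]
    exact sum_count n
  · -- diagonal count
    rw [hP, Finset.sum_product]
    have inner : ∀ i ∈ Finset.Icc 1 n,
        (∑ j ∈ Finset.Icc 1 n, if i = j ∧ 0 < ζ i then 1 else 0)
          = if 0 < ζ i then 1 else 0 := by
      intro i hi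
      have e : ∀ j, (if i = j ∧ 0 < ζ i then (1 : ℕ) else 0)
          = if j = i then (if 0 < ζ i then 1 else 0) else 0 := by
        intro j
        rcases eq_or_ne j i with rfl | hne
        · simp
        · simp [hne, Ne.symm hne]
      rw [Finset.sum_congr rfl (fun j _ => e j), Finset.sum_ite_eq']
      simp [hi]
    rw [Finset.sum_congr rfl inner, ← Finset.card_filter]
    have : (Finset.Icc 1 n).filter (fun i => 0 < ζ i) = Finset.Icc 1 p := by
      ext i
      simp only [Finset.mem_filter, Finset.mem_Icc]
      constructor
      · rintro ⟨⟨h1, h2⟩, h3⟩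
        refine ⟨h1, ?_⟩
        by_contra hc
        have := hζneg i (by omega) h2
        omega
      · rintro ⟨h1, h2⟩
        exact ⟨⟨h1, by omega⟩, hζpos i h1 h2⟩
    rw [this, Nat.card_Icc]
    omega
end

section
/- Let x = (μ, ν) and x' = (μ', ν') be bipartitions in BRP^{00}_n and BRP^{00}_{n'} respectively (with appropriate staircases), both viewed via the odd-root criterion for the Borel subalgebras of pe(n). Then for x, x' ∈ BRP^{00}_n, one has b(ζ_x) ⊊ b(ζ_{x'}) as subalgebras (equivalently, {odd roots α : (ζ_x, α) > 0} ⊊ {odd roots α : (ζ_{x'}, α) > 0}) if and only if μ' = (μ, 1) and ν = (ν', 1), i.e., μ' is obtained from μ by appending a part 1 and ν is obtained from ν' by appending a part 1. -/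
/-- The bipartition `(μ, ν)` with `ℓ(μ) = p`, `ℓ(ν) = q`, `p + q = n`, lies in `BRP⁰⁰ₙ`:
its parts are exactly `n, n−1, …, 1`. -/
def IsBRP00 (n p q : ℕ) (μ ν : ℕ → ℕ) : Prop :=
  p + q = n ∧ (∀ i, 1 ≤ i → i ≤ p → 0 < μ i) ∧ (∀ i, p < i → μ i = 0) ∧
  (∀ i, 1 ≤ i → μ (i + 1) ≤ μ i) ∧
  (∀ j, 1 ≤ j → j ≤ q → 0 < ν j) ∧ (∀ j, q < j → ν j = 0) ∧
  (∀ j, 1 ≤ j → ν (j + 1) ≤ ν j) ∧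
  ((Finset.Icc 1 p).val.map μ) + ((Finset.Icc 1 q).val.map ν) = (Finset.Icc 1 n).val

lemma aux_sum_mul_eps (n i : ℕ) (ζ : ℕ → ℤ) (h1 : 1 ≤ i) (h2 : i ≤ n) :
    ∑ k ∈ Finset.Icc 1 n, ζ k * eps i k = ζ i := by
  have h : ∀ k, ζ k * eps i k = if k = i then ζ k else 0 := by
    intro k; simp only [eps]; split <;> simp
  simp only [h, Finset.sum_ite_eq' (Finset.Icc 1 n) i ζ]
  simp [Finset.mem_Icc, h1, h2]

lemma aux_pairing_pp (n i j : ℕ) (ζ : ℕ → ℤ) (hi1 : 1 ≤ i) (hin : i ≤ n)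
    (hj1 : 1 ≤ j) (hjn : j ≤ n) :
    pairing n ζ (eps i + eps j) = ζ i + ζ j := by
  unfold pairing
  have : ∀ k, ζ k * (eps i + eps j) k = ζ k * eps i k + ζ k * eps j k := by
    intro k; simp [Pi.add_apply, mul_add]
  simp only [this, Finset.sum_add_distrib,
    aux_sum_mul_eps n i ζ hi1 hin, aux_sum_mul_eps n j ζ hj1 hjn]

lemma aux_pairing_mm (n i j : ℕ) (ζ : ℕ → ℤ) (hi1 : 1 ≤ i) (hin : i ≤ n)
    (hj1 : 1 ≤ j) (hjn : j ≤ n) :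
    pairing n ζ (-eps i - eps j) = -(ζ i + ζ j) := by
  unfold pairing
  have : ∀ k, ζ k * (-eps i - eps j) k = -(ζ k * eps i k) + -(ζ k * eps j k) := by
    intro k; simp [Pi.sub_apply, Pi.neg_apply]; ring
  simp only [this, Finset.sum_add_distrib, Finset.sum_neg_distrib,
    aux_sum_mul_eps n i ζ hi1 hin, aux_sum_mul_eps n j ζ hj1 hjn]
  ring

/-- The key combinatorial induction. -/
lemma aux_key : ∀ (m a b : ℕ), b + 1 - a = m → ∀ (ζ ζ' : ℕ → ℤ),
    (∀ i j, a ≤ i → i < j → j ≤ b → ζ j < ζ i) →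
    (∀ i j, a ≤ i → i < j → j ≤ b → ζ' j < ζ' i) →
    (∀ k l, a ≤ k → k ≤ b → a ≤ l → l ≤ b → (ζ k).natAbs = (ζ l).natAbs → k = l) →
    (∀ k l, a ≤ k → k ≤ b → a ≤ l → l ≤ b → (ζ' k).natAbs = (ζ' l).natAbs → k = l) →
    (∀ k, a ≤ k → k ≤ b → 1 ≤ (ζ k).natAbs ∧ (ζ k).natAbs ≤ m) →
    (∀ k, a ≤ k → k ≤ b → 1 ≤ (ζ' k).natAbs ∧ (ζ' k).natAbs ≤ m) →
    (∀ i j, a ≤ i → i < j → j ≤ b → (0 < ζ i + ζ j ↔ 0 < ζ' i + ζ' j)) →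
    ∀ k, a ≤ k → k ≤ b → ζ k = ζ' k ∨ ((ζ k).natAbs = 1 ∧ (ζ' k).natAbs = 1) := by
  intro m
  induction m with
  | zero => intro a b hab ζ ζ' _ _ _ _ _ _ _ k hak hkb; omega
  | succ m ih =>
    intro a b hab ζ ζ' hdec hdec' hinj hinj' hbd hbd' hs k hak hkb
    by_cases heq : a = b
    · subst heq
      have h1 := hbd k hak hkb
      have h2 := hbd' k hak hkb
      have hm : m = 0 := by omega
      exact Or.inr ⟨by omega, by omega⟩
    · have hlt : a < b := by omega
      -- pigeonhole: some position has magnitude m+1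
      have hex : ∀ (ξ : ℕ → ℤ),
          (∀ k l, a ≤ k → k ≤ b → a ≤ l → l ≤ b → (ξ k).natAbs = (ξ l).natAbs → k = l) →
          (∀ k, a ≤ k → k ≤ b → 1 ≤ (ξ k).natAbs ∧ (ξ k).natAbs ≤ m + 1) →
          ∃ k₀, a ≤ k₀ ∧ k₀ ≤ b ∧ (ξ k₀).natAbs = m + 1 := by
        intro ξ hi hb
        by_contra hcon
        push_neg at hcon
        have hsub : (Finset.Icc a b).image (fun k => (ξ k).natAbs) ⊆ Finset.Icc 1 m := by
          intro x hx
          simp only [Finset.mem_image, Finset.mem_Icc] at hx ⊢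
          obtain ⟨k', hk', hx⟩ := hx
          have := hb k' hk'.1 hk'.2
          have := hcon k' hk'.1 hk'.2
          omega
        have hcard : ((Finset.Icc a b).image (fun k => (ξ k).natAbs)).card
            = (Finset.Icc a b).card := by
          apply Finset.card_image_of_injOn
          intro x hx y hy hxy
          simp only [Finset.coe_Icc, Set.mem_Icc] at hx hy
          exact hi x y hx.1 hx.2 hy.1 hy.2 hxy
        have h1 := Finset.card_le_card hsub
        rw [hcard] at h1
        simp only [Nat.card_Icc] at h1
        omega
      obtain ⟨k₀, hk₀a, hk₀b, hk₀⟩ := hex ζ hinj hbd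
      obtain ⟨k₁, hk₁a, hk₁b, hk₁⟩ := hex ζ' hinj' hbd'
      have hloc : ζ a = ((m:ℤ)+1) ∨ ζ b = -((m:ℤ)+1) := by
        rcases lt_trichotomy (ζ k₀) 0 with h | h | h
        · right
          have hb2 : ζ b ≤ ζ k₀ := by
            rcases eq_or_lt_of_le hk₀b with h' | h'
            · rw [h']
            · exact le_of_lt (hdec k₀ b hk₀a h' le_rfl)
          have := (hbd b (by omega) le_rfl).2
          omega
        · omega
        · left
          have ha2 : ζ k₀ ≤ ζ a := by
            rcases eq_or_lt_of_le hk₀a with h' | h'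
            · rw [h']
            · exact le_of_lt (hdec a k₀ le_rfl h' hk₀b)
          have := (hbd a le_rfl (by omega)).2
          omega
      have hloc' : ζ' a = ((m:ℤ)+1) ∨ ζ' b = -((m:ℤ)+1) := by
        rcases lt_trichotomy (ζ' k₁) 0 with h | h | h
        · right
          have hb2 : ζ' b ≤ ζ' k₁ := by
            rcases eq_or_lt_of_le hk₁b with h' | h'
            · rw [h']
            · exact le_of_lt (hdec' k₁ b hk₁a h' le_rfl)
          have := (hbd' b (by omega) le_rfl).2
          omega
        · omega
        · left
          have ha2 : ζ' k₁ ≤ ζ' a := by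
            rcases eq_or_lt_of_le hk₁a with h' | h'
            · rw [h']
            · exact le_of_lt (hdec' a k₁ le_rfl h' hk₁b)
          have := (hbd' a le_rfl (by omega)).2
          omega
      rcases hloc with hja | hjb
      · -- max magnitude positive, at position a, for both
        have hζbabs : (ζ b).natAbs ≤ m := by
          have h2 := (hbd b (by omega) le_rfl).2
          have hne : (ζ b).natAbs ≠ m + 1 := by
            intro hc
            have : a = b := hinj a b le_rfl (by omega) (by omega) le_rfl (by omega)
            omega
          omega
        have hsum : 0 < ζ a + ζ b := by omega
        have hsum' : 0 < ζ' a + ζ' b := (hs a b le_rfl hlt le_rfl).mp hsum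
        have hja' : ζ' a = ((m:ℤ)+1) := by
          rcases hloc' with h | h
          · exact h
          · exfalso
            have h2 := (hbd' a le_rfl (by omega)).2
            have hne : (ζ' a).natAbs ≠ m + 1 := by
              intro hc
              have : a = b := hinj' a b le_rfl (by omega) (by omega) le_rfl (by omega)
              omega
            omega
        rcases eq_or_lt_of_le hak with h' | h'
        · left; rw [← h', hja, hja']
        · refine ih (a+1) b (by omega) ζ ζ'
            (fun i j hi hij hj => hdec i j (by omega) hij hj)
            (fun i j hi hij hj => hdec' i j (by omega) hij hj)
            (fun x y hx1 hx2 hy1 hy2 hxy => hinj x y (by omega) hx2 (by omega) hy2 hxy)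
            (fun x y hx1 hx2 hy1 hy2 hxy => hinj' x y (by omega) hx2 (by omega) hy2 hxy)
            ?_ ?_
            (fun i j hi hij hj => hs i j (by omega) hij hj)
            k (by omega) hkb
          · intro x hx1 hx2
            have h2 := hbd x (by omega) hx2
            have hne : (ζ x).natAbs ≠ m + 1 := by
              intro hc
              have : x = a := hinj x a (by omega) hx2 le_rfl (by omega) (by omega)
              omega
            omega
          · intro x hx1 hx2
            have h2 := hbd' x (by omega) hx2
            have hne : (ζ' x).natAbs ≠ m + 1 := by
              intro hc
              have : x = a := hinj' x a (by omega) hx2 le_rfl (by omega) (by omega)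
              omega
            omega
      · -- max magnitude negative, at position b, for both
        have hζaabs : (ζ a).natAbs ≤ m := by
          have h2 := (hbd a le_rfl (by omega)).2
          have hne : (ζ a).natAbs ≠ m + 1 := by
            intro hc
            have : a = b := hinj a b le_rfl (by omega) (by omega) le_rfl (by omega)
            omega
          omega
        have hsum : ¬ (0 < ζ a + ζ b) := by omega
        have hsum' : ¬ (0 < ζ' a + ζ' b) := fun hc =>
          hsum ((hs a b le_rfl hlt le_rfl).mpr hc)
        have hjb' : ζ' b = -((m:ℤ)+1) := by
          rcases hloc' with h | h
          · exfalso
            have h2 := (hbd' b (by omega) le_rfl).2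
            have hne : (ζ' b).natAbs ≠ m + 1 := by
              intro hc
              have : a = b := hinj' a b le_rfl (by omega) (by omega) le_rfl (by omega)
              omega
            omega
          · exact h
        rcases eq_or_lt_of_le hkb with h' | h'
        · left; rw [h', hjb, hjb']
        · refine ih a (b-1) (by omega) ζ ζ'
            (fun i j hi hij hj => hdec i j hi hij (by omega))
            (fun i j hi hij hj => hdec' i j hi hij (by omega))
            (fun x y hx1 hx2 hy1 hy2 hxy => hinj x y hx1 (by omega) hy1 (by omega) hxy)
            (fun x y hx1 hx2 hy1 hy2 hxy => hinj' x y hx1 (by omega) hy1 (by omega) hxy)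
            ?_ ?_
            (fun i j hi hij hj => hs i j hi hij (by omega))
            k hak (by omega)
          · intro x hx1 hx2
            have h2 := hbd x hx1 (by omega)
            have hne : (ζ x).natAbs ≠ m + 1 := by
              intro hc
              have : x = b := hinj x b hx1 (by omega) (by omega) le_rfl (by omega)
              omega
            omega
          · intro x hx1 hx2
            have h2 := hbd' x hx1 (by omega)
            have hne : (ζ' x).natAbs ≠ m + 1 := by
              intro hc
              have : x = b := hinj' x b hx1 (by omega) (by omega) le_rfl (by omega)
              omega
            omega

/-- The basic facts about `ζ = zetaWt n p μ ν` for a bipartition in `BRP⁰⁰ₙ`. -/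
lemma aux_brp (n p q : ℕ) (μ ν : ℕ → ℕ) (h : IsBRP00 n p q μ ν) :
    (∀ k, 1 ≤ k → k ≤ n → k ≤ p → zetaWt n p μ ν k = (μ k : ℤ)) ∧
    (∀ k, 1 ≤ k → k ≤ n → p < k → zetaWt n p μ ν k = -(ν (n+1-k) : ℤ)) ∧
    (∀ k, 1 ≤ k → k ≤ n → (0 < zetaWt n p μ ν k ↔ k ≤ p)) ∧
    (∀ i j, 1 ≤ i → i < j → j ≤ n → zetaWt n p μ ν j < zetaWt n p μ ν i) ∧
    (∀ k l, 1 ≤ k → k ≤ n → 1 ≤ l → l ≤ n →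
      (zetaWt n p μ ν k).natAbs = (zetaWt n p μ ν l).natAbs → k = l) ∧
    (∀ k, 1 ≤ k → k ≤ n → 1 ≤ (zetaWt n p μ ν k).natAbs ∧ (zetaWt n p μ ν k).natAbs ≤ n) := by
  obtain ⟨hpq, hμpos, hμ0, hμanti, hνpos, hν0, hνanti, hmul⟩ := h
  have hμmem : ∀ i, 1 ≤ i → i ≤ p → 1 ≤ μ i ∧ μ i ≤ n := by
    intro i h1 h2
    have hm : μ i ∈ ((Finset.Icc 1 p).val.map μ) + ((Finset.Icc 1 q).val.map ν) :=
      Multiset.mem_add.mpr (Or.inl (Multiset.mem_map_of_mem μ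
        (Finset.mem_val.mpr (Finset.mem_Icc.mpr ⟨h1, h2⟩))))
    rw [hmul] at hm
    simpa [Finset.mem_Icc] using hm
  have hνmem : ∀ j, 1 ≤ j → j ≤ q → 1 ≤ ν j ∧ ν j ≤ n := by
    intro j h1 h2
    have hm : ν j ∈ ((Finset.Icc 1 p).val.map μ) + ((Finset.Icc 1 q).val.map ν) :=
      Multiset.mem_add.mpr (Or.inr (Multiset.mem_map_of_mem ν
        (Finset.mem_val.mpr (Finset.mem_Icc.mpr ⟨h1, h2⟩))))
    rw [hmul] at hm
    simpa [Finset.mem_Icc] using hm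
  have hnd : (((Finset.Icc 1 p).val.map μ) + ((Finset.Icc 1 q).val.map ν)).Nodup := by
    rw [hmul]; exact (Finset.Icc 1 n).nodup
  obtain ⟨hndμ, hndν, hdisj⟩ := Multiset.nodup_add.mp hnd
  have hμinj : ∀ i j, 1 ≤ i → i ≤ p → 1 ≤ j → j ≤ p → μ i = μ j → i = j := by
    intro i j h1 h2 h3 h4 h5
    exact Multiset.inj_on_of_nodup_map hndμ i
      (Finset.mem_val.mpr (Finset.mem_Icc.mpr ⟨h1, h2⟩)) j
      (Finset.mem_val.mpr (Finset.mem_Icc.mpr ⟨h3, h4⟩)) h5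
  have hνinj : ∀ i j, 1 ≤ i → i ≤ q → 1 ≤ j → j ≤ q → ν i = ν j → i = j := by
    intro i j h1 h2 h3 h4 h5
    exact Multiset.inj_on_of_nodup_map hndν i
      (Finset.mem_val.mpr (Finset.mem_Icc.mpr ⟨h1, h2⟩)) j
      (Finset.mem_val.mpr (Finset.mem_Icc.mpr ⟨h3, h4⟩)) h5
  have hμν : ∀ i j, 1 ≤ i → i ≤ p → 1 ≤ j → j ≤ q → μ i ≠ ν j := by
    intro i j h1 h2 h3 h4 hc
    have hm1 : μ i ∈ (Finset.Icc 1 p).val.map μ :=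
      Multiset.mem_map_of_mem μ (Finset.mem_val.mpr (Finset.mem_Icc.mpr ⟨h1, h2⟩))
    have hm2 : μ i ∈ (Finset.Icc 1 q).val.map ν := by
      rw [hc]
      exact Multiset.mem_map_of_mem ν (Finset.mem_val.mpr (Finset.mem_Icc.mpr ⟨h3, h4⟩))
    exact Multiset.disjoint_left.mp hdisj hm1 hm2
  have hμw : ∀ i j, 1 ≤ i → i ≤ j → μ j ≤ μ i := by
    intro i j h1 h2
    induction j, h2 using Nat.le_induction with
    | base => exact le_rfl
    | succ j hij ihj => exact le_trans (hμanti j (by omega)) ihj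
  have hνw : ∀ i j, 1 ≤ i → i ≤ j → ν j ≤ ν i := by
    intro i j h1 h2
    induction j, h2 using Nat.le_induction with
    | base => exact le_rfl
    | succ j hij ihj => exact le_trans (hνanti j (by omega)) ihj
  have hμs : ∀ i j, 1 ≤ i → i < j → j ≤ p → μ j < μ i := by
    intro i j h1 h2 h3
    have hw := hμw i j h1 (le_of_lt h2)
    rcases eq_or_lt_of_le hw with h' | h'
    · exact absurd (hμinj j i (by omega) h3 h1 (by omega) h') (by omega)
    · exact h'
  have hνs : ∀ i j, 1 ≤ i → i < j → j ≤ q → ν j < ν i := by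
    intro i j h1 h2 h3
    have hw := hνw i j h1 (le_of_lt h2)
    rcases eq_or_lt_of_le hw with h' | h'
    · exact absurd (hνinj j i (by omega) h3 h1 (by omega) h') (by omega)
    · exact h'
  have hval1 : ∀ k, 1 ≤ k → k ≤ n → k ≤ p → zetaWt n p μ ν k = (μ k : ℤ) := by
    intro k _ _ h3; simp [zetaWt, h3]
  have hval2 : ∀ k, 1 ≤ k → k ≤ n → p < k → zetaWt n p μ ν k = -(ν (n+1-k) : ℤ) := by
    intro k _ _ h3; simp [zetaWt, Nat.not_le.mpr h3]
  have hsgn : ∀ k, 1 ≤ k → k ≤ n → (0 < zetaWt n p μ ν k ↔ k ≤ p) := by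
    intro k h1 h2
    by_cases h3 : k ≤ p
    · rw [hval1 k h1 h2 h3]
      have := hμpos k h1 h3
      constructor
      · intro _; exact h3
      · intro _; exact_mod_cast this
    · rw [hval2 k h1 h2 (by omega)]
      have := hνpos (n+1-k) (by omega) (by omega)
      constructor
      · intro hc; exfalso; omega
      · intro hc; omega
  refine ⟨hval1, hval2, hsgn, ?_, ?_, ?_⟩
  · -- strictly decreasing
    intro i j h1 h2 h3
    by_cases hj : j ≤ p
    · rw [hval1 i h1 (by omega) (by omega), hval1 j (by omega) h3 hj]
      exact_mod_cast hμs i j h1 h2 hj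
    · by_cases hi : i ≤ p
      · have hzi := (hsgn i h1 (by omega)).mpr hi
        have hzj : ¬ (0 < zetaWt n p μ ν j) := fun hc => hj ((hsgn j (by omega) h3).mp hc)
        rw [hval2 j (by omega) h3 (by omega)] at hzj ⊢
        rw [hval1 i h1 (by omega) hi] at hzi ⊢
        have := hνpos (n+1-j) (by omega) (by omega)
        omega
      · rw [hval2 i h1 (by omega) (by omega), hval2 j (by omega) h3 (by omega)]
        have hlt : ν (n+1-i) < ν (n+1-j) := hνs (n+1-j) (n+1-i) (by omega) (by omega) (by omega)
        omega
  · -- injectivity of magnitudes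
    intro k l h1 h2 h3 h4 h5
    by_cases hk : k ≤ p <;> by_cases hl : l ≤ p
    · rw [hval1 k h1 h2 hk, hval1 l h3 h4 hl] at h5
      exact hμinj k l h1 hk h3 hl (by omega)
    · exfalso
      rw [hval1 k h1 h2 hk, hval2 l h3 h4 (by omega)] at h5
      exact hμν k (n+1-l) h1 hk (by omega) (by omega) (by omega)
    · exfalso
      rw [hval2 k h1 h2 (by omega), hval1 l h3 h4 hl] at h5
      exact hμν l (n+1-k) h3 hl (by omega) (by omega) (by omega)
    · rw [hval2 k h1 h2 (by omega), hval2 l h3 h4 (by omega)] at h5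
      have := hνinj (n+1-k) (n+1-l) (by omega) (by omega) (by omega) (by omega) (by omega)
      omega
  · -- bounds
    intro k h1 h2
    by_cases hk : k ≤ p
    · rw [hval1 k h1 h2 hk]
      have := hμmem k h1 hk
      omega
    · rw [hval2 k h1 h2 (by omega)]
      have := hνmem (n+1-k) (by omega) (by omega)
      omega

/-- For `x = (μ, ν)` and `x' = (μ', ν')` in `BRP⁰⁰ₙ`, the Borel subalgebra `b(ζ_x)` is
strictly contained in `b(ζ_{x'})` — equivalently, the set of odd roots pairing positively
with `ζ_x` is strictly contained in the one for `ζ_{x'}` — if and only if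
`μ' = (μ, 1)` and `ν = (ν', 1)`. -/
theorem stmt11 (n p q p' q' : ℕ) (μ ν μ' ν' : ℕ → ℕ)
    (hx : IsBRP00 n p q μ ν) (hx' : IsBRP00 n p' q' μ' ν') :
    {α | α ∈ OddRoots n ∧ 0 < pairing n (zetaWt n p μ ν) α} ⊂
      {α | α ∈ OddRoots n ∧ 0 < pairing n (zetaWt n p' μ' ν') α} ↔
    (p' = p + 1 ∧ (∀ i, 1 ≤ i → i ≤ p → μ' i = μ i) ∧ μ' p' = 1 ∧
      (∀ j, 1 ≤ j → j ≤ q' → ν j = ν' j) ∧ ν q = 1) := by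
  obtain ⟨hval1, hval2, hsgn, hdec, hinj, hbd⟩ := aux_brp n p q μ ν hx
  obtain ⟨hval1', hval2', hsgn', hdec', hinj', hbd'⟩ := aux_brp n p' q' μ' ν' hx'
  have hpq : p + q = n := hx.1
  have hpq' : p' + q' = n := hx'.1
  set ζ := zetaWt n p μ ν with hζ
  set ζ' := zetaWt n p' μ' ν' with hζ'
  constructor
  · intro hss
    have hsub := hss.subset
    have hpos : ∀ i j, 1 ≤ i → i ≤ j → j ≤ n → 0 < ζ i + ζ j → 0 < ζ' i + ζ' j := by
      intro i j h1 h2 h3 h4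
      have hmem : (eps i + eps j) ∈
          {α | α ∈ OddRoots n ∧ 0 < pairing n ζ α} := by
        refine ⟨Or.inl ⟨i, j, h1, h2, h3, rfl⟩, ?_⟩
        rw [aux_pairing_pp n i j ζ h1 (by omega) (by omega) h3]; exact h4
      have h5 := (hsub hmem).2
      rwa [aux_pairing_pp n i j ζ' h1 (by omega) (by omega) h3] at h5
    have hneg : ∀ i j, 1 ≤ i → i < j → j ≤ n → ζ i + ζ j < 0 → ζ' i + ζ' j < 0 := by
      intro i j h1 h2 h3 h4
      have hmem : (-eps i - eps j) ∈
          {α | α ∈ OddRoots n ∧ 0 < pairing n ζ α} := by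
        refine ⟨Or.inr ⟨i, j, h1, h2, h3, rfl⟩, ?_⟩
        rw [aux_pairing_mm n i j ζ h1 (by omega) (by omega) h3]; omega
      have h5 := (hsub hmem).2
      rw [aux_pairing_mm n i j ζ' h1 (by omega) (by omega) h3] at h5
      omega
    have hne0 : ∀ i j, 1 ≤ i → i < j → j ≤ n → ζ i + ζ j ≠ 0 := by
      intro i j h1 h2 h3 hc
      have h4 : (ζ i).natAbs = (ζ j).natAbs := by omega
      have := hinj i j h1 (by omega) (by omega) h3 h4
      omega
    have hiff : ∀ i j, 1 ≤ i → i < j → j ≤ n → (0 < ζ i + ζ j ↔ 0 < ζ' i + ζ' j) := by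
      intro i j h1 h2 h3
      constructor
      · exact hpos i j h1 (le_of_lt h2) h3
      · intro h4
        by_contra h5
        have h6 : ζ i + ζ j < 0 := by have := hne0 i j h1 h2 h3; omega
        have := hneg i j h1 h2 h3 h6
        omega
    have hkey := aux_key n 1 n (by omega) ζ ζ' hdec hdec' hinj hinj' hbd hbd' hiff
    -- the witness
    have hwit : ∃ i₀, 1 ≤ i₀ ∧ i₀ ≤ n ∧ ζ i₀ < 0 ∧ 0 < ζ' i₀ := by
      obtain ⟨α, hαR, hαL⟩ := Set.exists_of_ssubset hss
      rcases hαR.1 with ⟨i, j, h1, h2, h3, rfl⟩ | ⟨i, j, h1, h2, h3, rfl⟩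
      · have hR := hαR.2
        rw [aux_pairing_pp n i j ζ' h1 (by omega) (by omega) h3] at hR
        have hL : ¬ (0 < ζ i + ζ j) := by
          intro hc
          exact hαL ⟨Or.inl ⟨i, j, h1, h2, h3, rfl⟩, by
            rw [aux_pairing_pp n i j ζ h1 (by omega) (by omega) h3]; exact hc⟩
        rcases eq_or_lt_of_le h2 with h' | h'
        · subst h'
          refine ⟨i, h1, h3, ?_, by omega⟩
          have := (hbd i h1 h3).1
          omega
        · exact absurd ((hiff i j h1 h' h3).mpr hR) hL
      · exfalso
        have hR := hαR.2
        rw [aux_pairing_mm n i j ζ' h1 (by omega) (by omega) h3] at hR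
        have h6 : ζ i + ζ j < 0 := by
          by_contra h5
          have h7 : 0 < ζ i + ζ j := by have := hne0 i j h1 h2 h3; omega
          have := (hiff i j h1 h2 h3).mp h7
          omega
        exact hαL ⟨Or.inr ⟨i, j, h1, h2, h3, rfl⟩, by
          rw [aux_pairing_mm n i j ζ h1 (by omega) (by omega) h3]; omega⟩
    obtain ⟨i₀, hi₀1, hi₀n, hζneg, hζ'pos⟩ := hwit
    have hi₀abs : ζ i₀ = -1 ∧ ζ' i₀ = 1 := by
      rcases hkey i₀ hi₀1 hi₀n with h | h
      · omega
      · omega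
    have hothers : ∀ k, 1 ≤ k → k ≤ n → k ≠ i₀ → ζ k = ζ' k := by
      intro k hk1 hk2 hk3
      rcases hkey k hk1 hk2 with h | h
      · exact h
      · exact absurd (hinj k i₀ hk1 hk2 hi₀1 hi₀n (by omega)) hk3
    have hpi₀ : p < i₀ := by
      by_contra hc
      have := (hsgn i₀ hi₀1 hi₀n).mpr (by omega)
      omega
    have hi₀p' : i₀ ≤ p' := (hsgn' i₀ hi₀1 hi₀n).mp hζ'pos
    have hi₀eq : i₀ = p + 1 := by
      by_contra hc
      have h2 : p + 1 < i₀ := by omega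
      have h3 : ζ (p+1) = ζ' (p+1) := hothers (p+1) (by omega) (by omega) (by omega)
      have h4 : ¬ (0 < ζ (p+1)) := by
        have := hsgn (p+1) (by omega) (by omega); omega
      have h5 : 0 < ζ' (p+1) := (hsgn' (p+1) (by omega) (by omega)).mpr (by omega)
      omega
    have hp'eq : p' = p + 1 := by
      by_contra hc
      have h2 : p + 2 ≤ p' := by omega
      have h3 : 0 < ζ' (p+2) := (hsgn' (p+2) (by omega) (by omega)).mpr (by omega)
      have h4 : ζ (p+2) = ζ' (p+2) := hothers (p+2) (by omega) (by omega) (by omega)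
      have h5 : ¬ (0 < ζ (p+2)) := by
        have := hsgn (p+2) (by omega) (by omega); omega
      omega
    refine ⟨hp'eq, ?_, ?_, ?_, ?_⟩
    · intro i h1 h2
      have e1 : ζ i = (μ i : ℤ) := hval1 i h1 (by omega) h2
      have e2 : ζ' i = (μ' i : ℤ) := hval1' i h1 (by omega) (by omega)
      have e3 : ζ i = ζ' i := hothers i h1 (by omega) (by omega)
      omega
    · have e2 : ζ' i₀ = (μ' i₀ : ℤ) := hval1' i₀ hi₀1 hi₀n (by omega)
      have : μ' i₀ = 1 := by omega
      rw [hp'eq, ← hi₀eq]; exact this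
    · intro j hj1 hj2
      have hq' : q' = q - 1 := by omega
      have hqge : 1 ≤ q := by omega
      have hk1 : p + 2 ≤ n + 1 - j := by omega
      have hkn : n + 1 - j ≤ n := by omega
      have e1 : ζ (n+1-j) = -(ν (n+1-(n+1-j)) : ℤ) := hval2 (n+1-j) (by omega) hkn (by omega)
      have e2 : ζ' (n+1-j) = -(ν' (n+1-(n+1-j)) : ℤ) := hval2' (n+1-j) (by omega) hkn (by omega)
      have e3 : ζ (n+1-j) = ζ' (n+1-j) := hothers (n+1-j) (by omega) hkn (by omega)
      have hjj : n + 1 - (n+1-j) = j := by omega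
      rw [hjj] at e1 e2
      omega
    · have e1 : ζ i₀ = -(ν (n+1-i₀) : ℤ) := hval2 i₀ hi₀1 hi₀n hpi₀
      have hqq : n + 1 - i₀ = q := by omega
      rw [hqq] at e1
      omega
  · rintro ⟨hp', hμeq, hμ'1, hνeq, hνq1⟩
    have hp'n : p' ≤ n := by omega
    have hq' : q' = q - 1 := by omega
    have hqge : 1 ≤ q := by omega
    have hζp1 : ζ (p+1) = -1 := by
      have e := hval2 (p+1) (by omega) (by omega) (by omega)
      have hq1 : n + 1 - (p+1) = q := by omega
      rw [hq1, hνq1] at e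
      simpa using e
    have hζ'p1 : ζ' (p+1) = 1 := by
      have e := hval1' (p+1) (by omega) (by omega) (by omega)
      rw [e, ← hp', hμ'1]
      norm_num
    have hoth : ∀ k, 1 ≤ k → k ≤ n → k ≠ p + 1 → ζ k = ζ' k := by
      intro k h1 h2 h3
      by_cases hk : k ≤ p
      · rw [hval1 k h1 h2 hk, hval1' k h1 h2 (by omega), hμeq k h1 hk]
      · have hk2 : p + 2 ≤ k := by omega
        rw [hval2 k h1 h2 (by omega), hval2' k h1 h2 (by omega)]
        have hj1 : 1 ≤ n + 1 - k := by omega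
        have hj2 : n + 1 - k ≤ q' := by omega
        rw [hνeq (n+1-k) hj1 hj2]
    have hmag : ∀ k, 1 ≤ k → k ≤ n → k ≠ p + 1 → 2 ≤ (ζ k).natAbs := by
      intro k h1 h2 h3
      have hb := (hbd k h1 h2).1
      have hne : (ζ k).natAbs ≠ 1 := by
        intro hc
        exact h3 (hinj k (p+1) h1 h2 (by omega) (by omega) (by omega))
      omega
    have hle : ∀ k, 1 ≤ k → k ≤ n → ζ k ≤ ζ' k := by
      intro k h1 h2
      by_cases h3 : k = p + 1
      · subst h3; omega
      · rw [hoth k h1 h2 h3]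
    have hsub : {α | α ∈ OddRoots n ∧ 0 < pairing n ζ α} ⊆
        {α | α ∈ OddRoots n ∧ 0 < pairing n ζ' α} := by
      rintro α ⟨hαodd, hαpos⟩
      refine ⟨hαodd, ?_⟩
      rcases hαodd with ⟨i, j, h1, h2, h3, rfl⟩ | ⟨i, j, h1, h2, h3, rfl⟩
      · rw [aux_pairing_pp n i j ζ' h1 (by omega) (by omega) h3]
        rw [aux_pairing_pp n i j ζ h1 (by omega) (by omega) h3] at hαpos
        have ha := hle i h1 (by omega)
        have hb := hle j (by omega) h3
        omega
      · rw [aux_pairing_mm n i j ζ' h1 (by omega) (by omega) h3]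
        rw [aux_pairing_mm n i j ζ h1 (by omega) (by omega) h3] at hαpos
        by_cases hi : i = p + 1
        · have hj : j ≠ p + 1 := by omega
          have e1 : ζ j = ζ' j := hoth j (by omega) h3 hj
          have e2 := hmag j (by omega) h3 hj
          subst hi
          omega
        · by_cases hj : j = p + 1
          · have e1 : ζ i = ζ' i := hoth i h1 (by omega) hi
            have e2 := hmag i h1 (by omega) hi
            subst hj
            omega
          · rw [← hoth i h1 (by omega) hi, ← hoth j (by omega) h3 hj]
            omega
    refine (Set.ssubset_iff_of_subset hsub).mpr
      ⟨eps (p+1) + eps (p+1), ⟨Or.inl ⟨p+1, p+1, by omega, le_rfl, by omega, rfl⟩, ?_⟩, ?_⟩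
    · rw [aux_pairing_pp n (p+1) (p+1) ζ' (by omega) (by omega) (by omega) (by omega)]
      omega
    · intro hc
      have h5 := hc.2
      rw [aux_pairing_pp n (p+1) (p+1) ζ (by omega) (by omega) (by omega) (by omega)] at h5
      omega
end

section
/- Let δ ∈ ℝ^n satisfy: all nonzero values among {|δ_i − δ_j|, |δ_i + δ_j| : 1 ≤ i, j ≤ n} are ≥ 2. Define γ ∈ ℤ^n by γ_i = ⌈δ_i⌉ if δ_i > 0, γ_i = 0 if δ_i = 0, and γ_i = ⌊δ_i⌋ if δ_i < 0. Then for all i, j, the sign of γ_i − γ_j equals the sign of δ_i − δ_j and the sign of γ_i + γ_j equals the sign of δ_i + δ_j. -/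
/-- The rounding `δ ↦ ⌈δ⌉` if `δ > 0`, `0` if `δ = 0`, and `⌊δ⌋` if `δ < 0`. -/
noncomputable def roundOut (x : ℝ) : ℤ :=
  if 0 < x then ⌈x⌉ else if x = 0 then 0 else ⌊x⌋

lemma roundOut_neg (x : ℝ) : roundOut (-x) = -roundOut x := by
  unfold roundOut
  rcases lt_trichotomy x 0 with hx | hx | hx
  · rw [if_pos (by linarith), if_neg (not_lt.2 hx.le), if_neg hx.ne, Int.ceil_neg]
  · simp [hx]
  · rw [if_neg (by linarith), if_neg (by linarith), if_pos hx, Int.floor_neg]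

lemma abs_roundOut_sub_lt (x : ℝ) : |(roundOut x : ℝ) - x| < 1 := by
  unfold roundOut
  rcases lt_trichotomy x 0 with hx | hx | hx
  · rw [if_neg (not_lt.2 hx.le), if_neg hx.ne]
    rw [abs_of_nonpos (by linarith [Int.floor_le x])]
    linarith [Int.sub_one_lt_floor x]
  · simp [hx]
  · rw [if_pos hx]
    rw [abs_of_nonneg (by linarith [Int.le_ceil x])]
    linarith [Int.ceil_lt_add_one x]

lemma sign_key {a b : ℝ} (hab : |a - b| < 2) (h0 : b = 0 → a = 0)
    (hb : b ≠ 0 → 2 ≤ |b|) : Real.sign a = Real.sign b := by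
  rcases eq_or_ne b 0 with rfl | hbne
  · rw [h0 rfl]
  · have h2 := hb hbne
    rcases lt_or_gt_of_ne hbne with hneg | hpos
    · rw [abs_of_neg hneg] at h2
      have : a < 0 := by
        rcases abs_lt.1 hab with ⟨h1, _⟩; linarith
      rw [Real.sign_of_neg this, Real.sign_of_neg hneg]
    · rw [abs_of_pos hpos] at h2
      have : 0 < a := by
        rcases abs_lt.1 hab with ⟨h1, _⟩; linarith
      rw [Real.sign_of_pos this, Real.sign_of_pos hpos]

/-- Let `δ ∈ ℝⁿ` be such that every nonzero value among `|δ_i − δ_j|`, `|δ_i + δ_j|` is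
`≥ 2`, and define `γ ∈ ℤⁿ` by `γ_i = ⌈δ_i⌉` if `δ_i > 0`, `γ_i = 0` if `δ_i = 0`, and
`γ_i = ⌊δ_i⌋` if `δ_i < 0`.  Then for all `i, j` the sign of `γ_i − γ_j` equals the sign
of `δ_i − δ_j` and the sign of `γ_i + γ_j` equals the sign of `δ_i + δ_j`. -/
theorem stmt14 (n : ℕ) (δ : Fin n → ℝ)
    (h : ∀ i j : Fin n, (δ i - δ j ≠ 0 → 2 ≤ |δ i - δ j|) ∧
      (δ i + δ j ≠ 0 → 2 ≤ |δ i + δ j|)) :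
    ∀ i j : Fin n,
      Real.sign ((roundOut (δ i) : ℝ) - (roundOut (δ j) : ℝ)) = Real.sign (δ i - δ j) ∧
      Real.sign ((roundOut (δ i) : ℝ) + (roundOut (δ j) : ℝ)) = Real.sign (δ i + δ j) := by
  intro i j
  have hi := abs_roundOut_sub_lt (δ i)
  have hj := abs_roundOut_sub_lt (δ j)
  constructor
  · apply sign_key
    · have := abs_add_le ((roundOut (δ i) : ℝ) - δ i) (δ j - (roundOut (δ j) : ℝ))
      rw [abs_sub_comm (δ j)] at this
      calc |(roundOut (δ i) : ℝ) - (roundOut (δ j) : ℝ) - (δ i - δ j)|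
          = |((roundOut (δ i) : ℝ) - δ i) + (δ j - (roundOut (δ j) : ℝ))| := by ring_nf
        _ < 2 := by linarith
    · intro h0
      have : δ i = δ j := by linarith
      rw [this]; ring
    · exact (h i j).1
  · apply sign_key
    · have := abs_add_le ((roundOut (δ i) : ℝ) - δ i) ((roundOut (δ j) : ℝ) - δ j)
      calc |(roundOut (δ i) : ℝ) + (roundOut (δ j) : ℝ) - (δ i + δ j)|
          = |((roundOut (δ i) : ℝ) - δ i) + ((roundOut (δ j) : ℝ) - δ j)| := by ring_nf
        _ < 2 := by linarith
    · intro h0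
      have hji : δ j = -δ i := by linarith
      rw [hji, roundOut_neg]
      push_cast; ring
    · exact (h i j).2
end
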